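/- For X ∈ ℝ^{N×N} symmetric with eigendecomposition X = VΞV' and α > 0, the matrix P_α(X) := (1/2)V(Ξ + (Ξ² + 4αI)^{1/2})V' is positive definite and is the unique minimizer over positive semidefinite matrices B of (1/2)‖B − X‖_F² − α·log det(B). -/

import Mathlib

open Matrix

lemma posDef_conj_aux {n : Type*} [Fintype n] [DecidableEq n] {A V : Matrix n n ℝ}
    (hA : A.PosDef) (hV : Vᵀ * V = 1) : (V * A * Vᵀ).PosDef := by
  have hV2 : V * Vᵀ = 1 := mul_eq_one_comm.mp hV
  have hAT : Aᵀ = A := (Matrix.conjTranspose_eq_transpose_of_trivial A).symm.trans hA.1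
  refine Matrix.PosDef.of_dotProduct_mulVec_pos ?_ ?_
  · show (V * A * Vᵀ)ᴴ = _
    rw [Matrix.conjTranspose_eq_transpose_of_trivial]
    simp [Matrix.transpose_mul, Matrix.transpose_transpose, hAT, Matrix.mul_assoc]
  · intro x hx
    have hy : Vᵀ *ᵥ x ≠ 0 := by
      intro h
      apply hx
      have h2 : V *ᵥ (Vᵀ *ᵥ x) = V *ᵥ 0 := by rw [h]
      simpa [Matrix.mulVec_mulVec, hV2] using h2
    have h2 := hA.dotProduct_mulVec_pos hy
    have hstar : ∀ v : n → ℝ, star v = v := fun v => funext fun i => by simp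
    calc (0:ℝ) < star (Vᵀ *ᵥ x) ⬝ᵥ (A *ᵥ (Vᵀ *ᵥ x)) := h2
      _ = star x ⬝ᵥ ((V * A * Vᵀ) *ᵥ x) := by
          rw [hstar, hstar, ← Matrix.mulVec_mulVec, ← Matrix.mulVec_mulVec,
            Matrix.dotProduct_mulVec x, ← Matrix.mulVec_transpose]

theorem logdet_prox_matrix {N : ℕ} (X : Matrix (Fin N) (Fin N) ℝ)
    (V : Matrix (Fin N) (Fin N) ℝ) (ξ : Fin N → ℝ) (α : ℝ) (hα : 0 < α)
    (hV : Vᵀ * V = 1) (hX : X = V * Matrix.diagonal ξ * Vᵀ)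
    (P : Matrix (Fin N) (Fin N) ℝ)
    (hP : P = (1 / 2 : ℝ) •
      (V * Matrix.diagonal (fun i => ξ i + Real.sqrt ((ξ i) ^ 2 + 4 * α)) * Vᵀ)) :
    P.PosDef ∧
      ∀ B : Matrix (Fin N) (Fin N) ℝ, B.PosSemidef → B.det ≠ 0 → B ≠ P →
        (1 / 2) * (∑ i, ∑ j, (P i j - X i j) ^ 2) - α * Real.log P.det <
          (1 / 2) * (∑ i, ∑ j, (B i j - X i j) ^ 2) - α * Real.log B.det := by
  classical
  have hV2 : V * Vᵀ = 1 := mul_eq_one_comm.mp hV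
  set s : Fin N → ℝ := fun i => Real.sqrt (ξ i ^ 2 + 4 * α) with hs_def
  have hsq : ∀ i, s i ^ 2 = ξ i ^ 2 + 4 * α := fun i =>
    Real.sq_sqrt (by positivity)
  have hs0 : ∀ i, 0 ≤ s i := fun i => Real.sqrt_nonneg _
  set p : Fin N → ℝ := fun i => (ξ i + s i) / 2 with hp_def
  have hp : ∀ i, 0 < p i := by
    intro i
    have h1 := hsq i
    have h2 := hs0 i
    simp only [hp_def]
    nlinarith [sq_nonneg (ξ i + s i), sq_nonneg (ξ i - s i)]
  -- conjugation lemmas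
  have conj_mul : ∀ d e : Fin N → ℝ,
      (V * Matrix.diagonal d * Vᵀ) * (V * Matrix.diagonal e * Vᵀ)
        = V * Matrix.diagonal (fun i => d i * e i) * Vᵀ := by
    intro d e
    rw [Matrix.mul_assoc (V * Matrix.diagonal d) Vᵀ (V * Matrix.diagonal e * Vᵀ),
      ← Matrix.mul_assoc Vᵀ (V * Matrix.diagonal e) Vᵀ, ← Matrix.mul_assoc Vᵀ V, hV,
      Matrix.one_mul, ← Matrix.mul_assoc, Matrix.mul_assoc V, Matrix.diagonal_mul_diagonal]
  have trace_conj : ∀ d : Fin N → ℝ,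
      Matrix.trace (V * Matrix.diagonal d * Vᵀ) = ∑ i, d i := by
    intro d
    rw [Matrix.trace_mul_cycle, hV, Matrix.one_mul, Matrix.trace_diagonal]
  have hdetVV : Matrix.det V * Matrix.det V = 1 := by
    have := congrArg Matrix.det hV
    rwa [Matrix.det_mul, Matrix.det_transpose, Matrix.det_one] at this
  have det_conj : ∀ d : Fin N → ℝ,
      Matrix.det (V * Matrix.diagonal d * Vᵀ) = ∏ i, d i := by
    intro d
    rw [Matrix.det_mul, Matrix.det_mul, Matrix.det_transpose, Matrix.det_diagonal]
    linear_combination (∏ i, d i) * hdetVV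
  have conj_one : V * Matrix.diagonal (fun _ : Fin N => (1:ℝ)) * Vᵀ = 1 := by
    rw [show Matrix.diagonal (fun _ : Fin N => (1:ℝ)) = 1 from Matrix.diagonal_one,
      Matrix.mul_one, hV2]
  -- P as conjugated diagonal
  have hP' : P = V * Matrix.diagonal p * Vᵀ := by
    have hd : p = (1/2 : ℝ) • fun i => ξ i + Real.sqrt (ξ i ^ 2 + 4 * α) := by
      funext i
      simp only [hp_def, hs_def, Pi.smul_apply, smul_eq_mul]
      ring
    rw [hP, hd, Matrix.diagonal_smul, Matrix.mul_smul, Matrix.smul_mul]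
  have hPdef : P.PosDef := hP' ▸ posDef_conj_aux (Matrix.PosDef.diagonal hp) hV
  refine ⟨hPdef, ?_⟩
  intro B hB hBdet hBP
  -- square root inverse Q
  set q : Fin N → ℝ := fun i => (Real.sqrt (p i))⁻¹ with hq_def
  have hq_pos : ∀ i, 0 < q i := fun i =>
    inv_pos.mpr (Real.sqrt_pos.mpr (hp i))
  have hq2 : ∀ i, q i * q i = (p i)⁻¹ := by
    intro i
    show (Real.sqrt (p i))⁻¹ * (Real.sqrt (p i))⁻¹ = (p i)⁻¹
    rw [← mul_inv, Real.mul_self_sqrt (hp i).le]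
  set Q : Matrix (Fin N) (Fin N) ℝ := V * Matrix.diagonal q * Vᵀ with hQ_def
  have hQPQ : Q * P * Q = 1 := by
    rw [hP', hQ_def, conj_mul, conj_mul]
    have h1 : (fun i => (q i * p i) * q i) = fun _ : Fin N => (1:ℝ) := by
      funext i
      rw [mul_comm (q i) (p i), mul_assoc, hq2 i, mul_inv_cancel₀ (hp i).ne']
    rw [h1, conj_one]
  have hQQ : Q * Q = V * Matrix.diagonal (fun i => q i * q i) * Vᵀ := conj_mul q q
  -- P - X = α • (Q * Q)
  have hscal : ∀ i : Fin N, p i - ξ i = α * (q i * q i) := by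
    intro i
    rw [hq2 i]
    show (ξ i + s i) / 2 - ξ i = α * (((ξ i + s i) / 2)⁻¹)
    have hx : ((ξ i + s i) / 2) ≠ 0 := (hp i).ne'
    have key : ((ξ i + s i) / 2 - ξ i) * ((ξ i + s i) / 2) = α := by
      linear_combination (hsq i) / 4
    rw [← key, mul_assoc, mul_inv_cancel₀ hx, mul_one]
  have hPX : P - X = α • (Q * Q) := by
    rw [hQQ, hP', hX, ← Matrix.sub_mul, ← Matrix.mul_sub, Matrix.diagonal_sub]
    have h2 : (fun i => p i - ξ i) = fun i => α * (q i * q i) := funext hscal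
    rw [h2]
    have h1 : (fun i => α * (q i * q i)) = α • fun i => q i * q i := rfl
    rw [h1, Matrix.diagonal_smul, Matrix.mul_smul, Matrix.smul_mul]
  -- symmetry facts
  have hPsym : Pᵀ = P := by
    rw [hP']
    simp [Matrix.transpose_mul, Matrix.transpose_transpose, Matrix.diagonal_transpose,
      Matrix.mul_assoc]
  have hXsym : Xᵀ = X := by
    rw [hX]
    simp [Matrix.transpose_mul, Matrix.transpose_transpose, Matrix.diagonal_transpose,
      Matrix.mul_assoc]
  have hQsym : Qᵀ = Q := by
    rw [hQ_def]
    simp [Matrix.transpose_mul, Matrix.transpose_transpose, Matrix.diagonal_transpose,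
      Matrix.mul_assoc]
  have hQH : Qᴴ = Q := (Matrix.conjTranspose_eq_transpose_of_trivial Q).trans hQsym
  -- M = Q B Q
  have hM : (Q * B * Q).PosSemidef := by
    have := hB.mul_mul_conjTranspose_same Q
    rwa [hQH] at this
  set M : Matrix (Fin N) (Fin N) ℝ := Q * B * Q with hM_def
  set μ : Fin N → ℝ := hM.1.eigenvalues with hμ_def
  have hdetM_prod : Matrix.det M = ∏ i, μ i := by
    have := hM.1.det_eq_prod_eigenvalues
    simpa using this
  have htrM : Matrix.trace M = ∑ i, μ i := by
    nth_rewrite 1 [hM.1.spectral_theorem]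
    rw [Unitary.conjStarAlgAut_apply]
    rw [Matrix.trace_mul_cycle]
    rw [Matrix.mem_unitaryGroup_iff'.mp (Matrix.IsHermitian.eigenvectorUnitary hM.1).2]
    rw [Matrix.one_mul, Matrix.trace_diagonal]
    simp
    rfl
  -- determinants
  have hdetQ : Matrix.det Q = ∏ i, q i := det_conj q
  have hdetQ_pos : 0 < Matrix.det Q := by
    rw [hdetQ]; exact Finset.prod_pos fun i _ => hq_pos i
  have hdetP : Matrix.det P = ∏ i, p i := hP' ▸ det_conj p
  have hdetP_pos : 0 < Matrix.det P := by
    rw [hdetP]; exact Finset.prod_pos fun i _ => hp i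
  have hdetM : Matrix.det M = Matrix.det Q * Matrix.det B * Matrix.det Q := by
    rw [hM_def, Matrix.det_mul, Matrix.det_mul]
  have hdetM_ne : Matrix.det M ≠ 0 := by
    rw [hdetM]
    exact mul_ne_zero (mul_ne_zero hdetQ_pos.ne' hBdet) hdetQ_pos.ne'
  have hμ_pos : ∀ i, 0 < μ i := by
    intro i
    have h1 := hM.eigenvalues_nonneg i
    rcases h1.lt_or_eq with h | h
    · exact h
    · exfalso
      apply hdetM_ne
      rw [hdetM_prod]
      exact Finset.prod_eq_zero (Finset.mem_univ i) h.symm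
  have hdetM_pos : 0 < Matrix.det M := by
    rw [hdetM_prod]; exact Finset.prod_pos fun i _ => hμ_pos i
  have hdetB_pos : 0 < Matrix.det B := by
    rcases lt_trichotomy (Matrix.det B) 0 with h | h | h
    · exfalso
      have hlt : Matrix.det M < 0 := by
        rw [hdetM]
        exact mul_neg_of_neg_of_pos (mul_neg_of_pos_of_neg hdetQ_pos h) hdetQ_pos
      linarith [hdetM_pos]
    · exact absurd h hBdet
    · exact h
  -- log inequality
  have hlog_ineq : Real.log (Matrix.det M) ≤ Matrix.trace M - N := by
    rw [hdetM_prod, Real.log_prod (fun i _ => (hμ_pos i).ne'), htrM]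
    have h1 : ∑ i, Real.log (μ i) ≤ ∑ i, (μ i - 1) :=
      Finset.sum_le_sum fun i _ => Real.log_le_sub_one_of_pos (hμ_pos i)
    have h2 : ∑ i : Fin N, (μ i - 1) = (∑ i, μ i) - N := by
      rw [Finset.sum_sub_distrib]
      simp
    linarith
  -- log det M = log det B - log det P
  have hQPQdet : Matrix.det Q * Matrix.det P * Matrix.det Q = 1 := by
    have := congrArg Matrix.det hQPQ
    rwa [Matrix.det_mul, Matrix.det_mul, Matrix.det_one] at this
  have hlogM : Real.log (Matrix.det M) = Real.log (Matrix.det B) - Real.log (Matrix.det P) := by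
    have e1 : Real.log (Matrix.det M)
        = Real.log (Matrix.det Q) + Real.log (Matrix.det B) + Real.log (Matrix.det Q) := by
      rw [hdetM, Real.log_mul (mul_ne_zero hdetQ_pos.ne' hdetB_pos.ne') hdetQ_pos.ne',
        Real.log_mul hdetQ_pos.ne' hdetB_pos.ne']
    have e2 : Real.log (Matrix.det Q) + Real.log (Matrix.det P) + Real.log (Matrix.det Q)
        = 0 := by
      rw [← Real.log_mul hdetQ_pos.ne' hdetP_pos.ne',
        ← Real.log_mul (mul_ne_zero hdetQ_pos.ne' hdetP_pos.ne') hdetQ_pos.ne',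
        hQPQdet, Real.log_one]
    linarith
  -- trace identities
  have htrBQQ : Matrix.trace (B * (Q * Q)) = Matrix.trace M := by
    calc Matrix.trace (B * (Q * Q)) = Matrix.trace ((Q * Q) * B) := Matrix.trace_mul_comm _ _
      _ = Matrix.trace (Q * (Q * B)) := by rw [Matrix.mul_assoc]
      _ = Matrix.trace ((Q * B) * Q) := Matrix.trace_mul_comm Q (Q * B)
      _ = Matrix.trace M := by rw [hM_def, Matrix.mul_assoc]
  have htrPQQ : Matrix.trace (P * (Q * Q)) = (N : ℝ) := by
    rw [hQQ, hP', conj_mul]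
    have h1 : (fun i => p i * (q i * q i)) = fun _ : Fin N => (1:ℝ) := by
      funext i
      rw [hq2 i, mul_inv_cancel₀ (hp i).ne']
    rw [h1, conj_one]
    simp [Matrix.trace_one]
  have htrace_val : Matrix.trace ((B - P) * (P - X)) = α * (Matrix.trace M - N) := by
    rw [hPX, Matrix.mul_smul, Matrix.trace_smul, Matrix.sub_mul, Matrix.trace_sub,
      htrBQQ, htrPQQ]
    simp [smul_eq_mul]
  -- sum-trace bridge
  have hsum_trace : ∑ i, ∑ j, (B i j - P i j) * (P i j - X i j)
      = Matrix.trace ((B - P) * (P - X)) := by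
    rw [Matrix.trace]
    simp only [Matrix.diag_apply, Matrix.mul_apply, Matrix.sub_apply]
    apply Finset.sum_congr rfl
    intro i _
    apply Finset.sum_congr rfl
    intro j _
    have h1 : P j i = P i j := congrFun (congrFun hPsym i) j
    have h2 : X j i = X i j := congrFun (congrFun hXsym i) j
    rw [h1, h2]
  -- expansion
  have key : ∑ i, ∑ j, (B i j - X i j) ^ 2
      = (∑ i, ∑ j, (P i j - X i j) ^ 2) + (∑ i, ∑ j, (B i j - P i j) ^ 2)
        + 2 * Matrix.trace ((B - P) * (P - X)) := by
    rw [← hsum_trace, Finset.mul_sum]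
    rw [← Finset.sum_add_distrib, ← Finset.sum_add_distrib]
    apply Finset.sum_congr rfl
    intro i _
    rw [Finset.mul_sum, ← Finset.sum_add_distrib, ← Finset.sum_add_distrib]
    apply Finset.sum_congr rfl
    intro j _
    ring
  -- positivity of the gap
  have hpos : 0 < ∑ i, ∑ j, (B i j - P i j) ^ 2 := by
    obtain ⟨i, j, hij⟩ : ∃ i j, B i j ≠ P i j := by
      by_contra h
      push_neg at h
      exact hBP (by ext i j; exact h i j)
    refine Finset.sum_pos' (fun k _ => Finset.sum_nonneg fun l _ => sq_nonneg _)
      ⟨i, Finset.mem_univ i, Finset.sum_pos' (fun l _ => sq_nonneg _)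
        ⟨j, Finset.mem_univ j, pow_two_pos_of_ne_zero (sub_ne_zero.mpr hij)⟩⟩
  have hlog' : α * Real.log (Matrix.det M) ≤ α * (Matrix.trace M - N) :=
    mul_le_mul_of_nonneg_left hlog_ineq hα.le
  have e3 : α * Real.log (Matrix.det B) - α * Real.log (Matrix.det P)
      = α * Real.log (Matrix.det M) := by rw [hlogM]; ring
  have e4 : α * Real.log (Matrix.det M) ≤ Matrix.trace ((B - P) * (P - X)) := by
    rw [htrace_val]; exact hlog'
  linarith [key, e3, e4, hpos]
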